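/- Under the hypotheses that Cov(g(Û),g(Û)) = Cov(g(U),g(U)), g(U) is uncorrelated with h(X) and g(Û), h = H is linear, g = φ, and additionally Cov(H X - φ(Û), φ(Û)) = 0, the optimal gain of Z^h = H X - S(φ(Û) - φ(U)) is S = (1/2) I, half the identity operator. -/

import Mathlib

open MeasureTheory Matrix

/-- Component-wise mean of a random vector. -/
noncomputable def rmean {Ω : Type*} [MeasureSpace Ω] {ι : Type*}
    (X : Ω → ι → ℝ) : ι → ℝ := fun i => ∫ ω, X ω i

/-- Covariance matrix of two random vectors. -/
noncomputable def rcov {Ω : Type*} [MeasureSpace Ω] {ι κ : Type*}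
    (X : Ω → ι → ℝ) (Y : Ω → κ → ℝ) : Matrix ι κ ℝ :=
  Matrix.of fun i j => ∫ ω, (X ω i - rmean X i) * (Y ω j - rmean Y j)

section CovHelpers

variable {Ω : Type*} [MeasureSpace Ω] [IsProbabilityMeasure (volume : Measure Ω)]

/-- Scalar covariance of two real random variables. -/
noncomputable def cov (f g : Ω → ℝ) : ℝ :=
  ∫ ω, (f ω - ∫ ω', f ω') * (g ω - ∫ ω', g ω')

lemma rcov_apply {ι κ : Type*} (X : Ω → ι → ℝ) (Y : Ω → κ → ℝ) (i : ι) (j : κ) :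
    rcov X Y i j = cov (fun ω => X ω i) (fun ω => Y ω j) := rfl

lemma integrable_mul_of_L2 {f g : Ω → ℝ} (hf : MemLp f 2) (hg : MemLp g 2) :
    Integrable (fun ω => f ω * g ω) := by
  refine (hf.integrable_sq.add hg.integrable_sq).mono
    (hf.aestronglyMeasurable.mul hg.aestronglyMeasurable) ?_
  filter_upwards with ω
  simp only [norm_mul, Real.norm_eq_abs, Pi.add_apply]
  have h2 : |f ω ^ 2 + g ω ^ 2| = f ω ^ 2 + g ω ^ 2 := abs_of_nonneg (by positivity)
  rw [h2]
  nlinarith [sq_nonneg (|f ω| - |g ω|), sq_abs (f ω), sq_abs (g ω), abs_nonneg (f ω),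
    abs_nonneg (g ω)]

lemma memL2_sub_const {f : Ω → ℝ} (hf : MemLp f 2) (c : ℝ) :
    MemLp (fun ω => f ω - c) 2 := hf.sub (memLp_const c)

lemma integrable_cov_term {f g : Ω → ℝ} (hf : MemLp f 2) (hg : MemLp g 2) :
    Integrable (fun ω => (f ω - ∫ ω', f ω') * (g ω - ∫ ω', g ω')) :=
  integrable_mul_of_L2 (memL2_sub_const hf _) (memL2_sub_const hg _)

lemma cov_comm (f g : Ω → ℝ) : cov f g = cov g f := by
  unfold cov
  congr 1
  funext ω
  ring

lemma cov_sub_left {f1 f2 g : Ω → ℝ} (h1 : MemLp f1 2) (h2 : MemLp f2 2)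
    (hg : MemLp g 2) :
    cov (fun ω => f1 ω - f2 ω) g = cov f1 g - cov f2 g := by
  have hi1 := h1.integrable (by norm_num)
  have hi2 := h2.integrable (by norm_num)
  unfold cov
  rw [integral_sub hi1 hi2]
  have key : ∀ ω, (f1 ω - f2 ω - ((∫ ω', f1 ω') - ∫ ω', f2 ω')) * (g ω - ∫ ω', g ω')
      = (f1 ω - ∫ ω', f1 ω') * (g ω - ∫ ω', g ω')
        - (f2 ω - ∫ ω', f2 ω') * (g ω - ∫ ω', g ω') := fun ω => by ring
  simp_rw [key]
  exact integral_sub (integrable_cov_term h1 hg) (integrable_cov_term h2 hg)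

lemma cov_sub_right {f g1 g2 : Ω → ℝ} (hf : MemLp f 2) (h1 : MemLp g1 2)
    (h2 : MemLp g2 2) :
    cov f (fun ω => g1 ω - g2 ω) = cov f g1 - cov f g2 := by
  rw [cov_comm, cov_sub_left h1 h2 hf, cov_comm g1 f, cov_comm g2 f]

lemma cov_sub_sub {f1 f2 g1 g2 : Ω → ℝ} (h1 : MemLp f1 2) (h2 : MemLp f2 2)
    (h3 : MemLp g1 2) (h4 : MemLp g2 2) :
    cov (fun ω => f1 ω - f2 ω) (fun ω => g1 ω - g2 ω)
      = cov f1 g1 - cov f1 g2 - (cov f2 g1 - cov f2 g2) := by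
  have h34 : MemLp (fun ω => g1 ω - g2 ω) 2 := h3.sub h4
  rw [cov_sub_left h1 h2 h34, cov_sub_right h1 h3 h4, cov_sub_right h2 h3 h4]

lemma cov_sum_left {κ : Type*} [Fintype κ] (a : κ → ℝ) (f : κ → Ω → ℝ) (g : Ω → ℝ)
    (hf : ∀ j, MemLp (f j) 2) (hg : MemLp g 2) :
    cov (fun ω => ∑ j, a j * f j ω) g = ∑ j, a j * cov (f j) g := by
  unfold cov
  have hmean : (∫ ω, ∑ j, a j * f j ω) = ∑ j, a j * ∫ ω, f j ω := by
    rw [integral_finset_sum _ fun j _ => ((hf j).integrable (by norm_num)).const_mul (a j)]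
    simp_rw [integral_const_mul]
  rw [hmean]
  have key : ∀ ω, ((∑ j, a j * f j ω) - ∑ j, a j * ∫ ω', f j ω') * (g ω - ∫ ω', g ω')
      = ∑ j, a j * ((f j ω - ∫ ω', f j ω') * (g ω - ∫ ω', g ω')) := by
    intro ω
    rw [← Finset.sum_sub_distrib, Finset.sum_mul]
    exact Finset.sum_congr rfl fun j _ => by ring
  simp_rw [key]
  rw [integral_finset_sum _ fun j _ => (integrable_cov_term (hf j) hg).const_mul (a j)]
  simp_rw [integral_const_mul]

end CovHelpers

/-- **Theorem (optimal gain is half the identity).** With linear `h = H`,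
`g = φ`, equal covariances of `φ(Û)` and `φ(U)`, `φ(U)` uncorrelated with `HX`
and `φ(Û)`, and residual condition `Cov(HX - φ(Û), φ(Û)) = 0`, the gain
minimizing `trace Cov(Zʰ,Zʰ)` for `Zʰ = HX - S(φ(Û)-φ(U))` is `S = (1/2) I`. -/
theorem nonlinear_optimal_gain_half_identity
    {Ω : Type*} [MeasureSpace Ω] [IsProbabilityMeasure (volume : Measure Ω)]
    {n r m : ℕ} (X : Ω → Fin n → ℝ) (Uhat U : Ω → Fin r → ℝ)
    (H : Matrix (Fin m) (Fin n) ℝ) (φ : (Fin r → ℝ) → Fin m → ℝ)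
    (hlaw : (volume : Measure Ω).map Uhat = (volume : Measure Ω).map U)
    (hHX : ∀ i, MemLp (fun ω => H.mulVec (X ω) i) 2)
    (hφUhat : ∀ i, MemLp (fun ω => φ (Uhat ω) i) 2)
    (hφU : ∀ i, MemLp (fun ω => φ (U ω) i) 2)
    (huncorr1 : rcov (fun ω => φ (U ω)) (fun ω => H.mulVec (X ω)) = 0)
    (huncorr2 : rcov (fun ω => φ (U ω)) (fun ω => φ (Uhat ω)) = 0)
    (hcoveq : rcov (fun ω => φ (Uhat ω)) (fun ω => φ (Uhat ω))
              = rcov (fun ω => φ (U ω)) (fun ω => φ (U ω)))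
    (hpd : (rcov (fun ω => φ (Uhat ω)) (fun ω => φ (Uhat ω))).PosDef)
    (hres : rcov (fun ω => H.mulVec (X ω) - φ (Uhat ω)) (fun ω => φ (Uhat ω)) = 0)
    (Z : Matrix (Fin m) (Fin m) ℝ → Ω → Fin m → ℝ)
    (hZ : ∀ S ω, Z S ω = H.mulVec (X ω) - S.mulVec (φ (Uhat ω) - φ (U ω))) :
    ∀ S : Matrix (Fin m) (Fin m) ℝ,
      (rcov (Z ((1 / 2 : ℝ) • (1 : Matrix (Fin m) (Fin m) ℝ)))
            (Z ((1 / 2 : ℝ) • (1 : Matrix (Fin m) (Fin m) ℝ)))).trace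
        ≤ (rcov (Z S) (Z S)).trace := by
  intro S
  -- abbreviations
  set A : Fin m → Ω → ℝ := fun i ω => H.mulVec (X ω) i with hA
  set B : Fin m → Ω → ℝ := fun i ω => φ (Uhat ω) i with hB
  set C : Fin m → Ω → ℝ := fun i ω => φ (U ω) i with hC
  set P : Matrix (Fin m) (Fin m) ℝ :=
    rcov (fun ω => φ (Uhat ω)) (fun ω => φ (Uhat ω)) with hPdef
  have hD : ∀ j, MemLp (fun ω => B j ω - C j ω) 2 := fun j => (hφUhat j).sub (hφU j)
  -- basic covariance facts
  have hBB : ∀ i j, cov (B i) (B j) = P i j := fun i j => rfl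
  have hCA : ∀ j i, cov (C j) (A i) = 0 := by
    intro j i
    have h0 := congrFun (congrFun huncorr1 j) i
    simpa [rcov_apply] using h0
  have hAC : ∀ i j, cov (A i) (C j) = 0 := fun i j => (cov_comm _ _).trans (hCA j i)
  have hCB : ∀ j k, cov (C j) (B k) = 0 := by
    intro j k
    have h0 := congrFun (congrFun huncorr2 j) k
    simpa [rcov_apply] using h0
  have hBC : ∀ j k, cov (B j) (C k) = 0 := fun j k => (cov_comm _ _).trans (hCB k j)
  have hCC : ∀ j k, cov (C j) (C k) = P j k := by
    intro j k
    have h0 := congrFun (congrFun hcoveq j) k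
    exact h0.symm
  have hPsym : ∀ j k, P j k = P k j := by
    intro j k
    rw [← hBB j k, ← hBB k j, cov_comm]
  have hAB : ∀ i j, cov (A i) (B j) = P i j := by
    intro i j
    have h0 : cov (fun ω => A i ω - B i ω) (B j) = 0 := by
      have := congrFun (congrFun hres i) j
      simpa [rcov_apply] using this
    rw [cov_sub_left (hHX i) (hφUhat i) (hφUhat j), hBB] at h0
    linarith
  have hAD : ∀ i j, cov (A i) (fun ω => B j ω - C j ω) = P i j := by
    intro i j
    rw [cov_sub_right (hHX i) (hφUhat j) (hφU j), hAB, hAC, sub_zero]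
  have hDA : ∀ j i, cov (fun ω => B j ω - C j ω) (A i) = P i j := fun j i =>
    (cov_comm _ _).trans (hAD i j)
  have hDD : ∀ j k, cov (fun ω => B j ω - C j ω) (fun ω => B k ω - C k ω)
      = 2 * P j k := by
    intro j k
    rw [cov_sub_sub (hφUhat j) (hφU j) (hφUhat k) (hφU k), hBB, hBC, hCB, hCC]
    ring
  -- diagonal expansion of the covariance of Z S
  have hdiag : ∀ (T : Matrix (Fin m) (Fin m) ℝ) (i : Fin m),
      rcov (Z T) (Z T) i i
        = cov (A i) (A i) - (∑ j, T i j * P i j) - (∑ j, T i j * P i j)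
          + ∑ j, T i j * ∑ k, T i k * (2 * P j k) := by
    intro T i
    have hTmem : MemLp (fun ω => ∑ j, T i j * (B j ω - C j ω)) 2 :=
      memLp_finset_sum _ fun j _ => (hD j).const_mul (T i j)
    have hZi : (fun ω => Z T ω i) = fun ω => A i ω - ∑ j, T i j * (B j ω - C j ω) := by
      funext ω
      rw [hZ]
      simp [Matrix.mulVec, dotProduct, hA, hB, hC]
    have h1 : rcov (Z T) (Z T) i i
        = cov (fun ω => Z T ω i) (fun ω => Z T ω i) := rfl
    rw [h1, hZi, cov_sub_sub (hHX i) hTmem (hHX i) hTmem]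
    have hTA : cov (fun ω => ∑ j, T i j * (B j ω - C j ω)) (A i)
        = ∑ j, T i j * P i j := by
      rw [cov_sum_left _ _ _ hD (hHX i)]
      exact Finset.sum_congr rfl fun j _ => by rw [hDA]
    have hAT : cov (A i) (fun ω => ∑ j, T i j * (B j ω - C j ω))
        = ∑ j, T i j * P i j := (cov_comm _ _).trans hTA
    have hTT : cov (fun ω => ∑ j, T i j * (B j ω - C j ω))
          (fun ω => ∑ j, T i j * (B j ω - C j ω))
        = ∑ j, T i j * ∑ k, T i k * (2 * P j k) := by
      rw [cov_sum_left _ _ _ hD hTmem]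
      refine Finset.sum_congr rfl fun j _ => ?_
      congr 1
      rw [cov_comm, cov_sum_left _ _ _ hD (hD j)]
      refine Finset.sum_congr rfl fun k _ => ?_
      rw [hDD, hPsym k j]
    rw [hTA, hAT, hTT]
    ring
  -- evaluate at the half-identity gain
  set S₀ : Matrix (Fin m) (Fin m) ℝ := (1 / 2 : ℝ) • (1 : Matrix (Fin m) (Fin m) ℝ)
    with hS₀
  have hS₀app : ∀ i j, S₀ i j = if j = i then (1/2 : ℝ) else 0 := by
    intro i j
    simp [hS₀, Matrix.one_apply, eq_comm]
  -- per-diagonal-entry inequality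
  have hper : ∀ i, rcov (Z S₀) (Z S₀) i i ≤ rcov (Z S) (Z S) i i := by
    intro i
    rw [hdiag S i, hdiag S₀ i]
    have e1 : (∑ j, S₀ i j * P i j) = (1/2) * P i i := by
      simp [hS₀app, ite_mul]
    have e2 : (∑ j, S₀ i j * ∑ k, S₀ i k * (2 * P j k)) = (1/2) * P i i := by
      simp [hS₀app, ite_mul]
    rw [e1, e2]
    -- quadratic form positivity
    set v : Fin m → ℝ := fun j => S i j - if j = i then (1/2 : ℝ) else 0 with hv
    have hq : 0 ≤ v ⬝ᵥ P *ᵥ v := by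
      have := hpd.posSemidef.dotProduct_mulVec_nonneg v
      simpa [hPdef] using this
    have hexp : v ⬝ᵥ P *ᵥ v
        = (∑ j, ∑ k, S i j * (S i k * P j k)) - (∑ j, S i j * P i j)
          + (1/4) * P i i := by
      have hPv : ∀ j, (P *ᵥ v) j = (∑ k, P j k * S i k) - (1/2) * P j i := by
        intro j
        simp only [mulVec, dotProduct, hv, mul_sub]
        rw [Finset.sum_sub_distrib]
        congr 1
        simp [mul_ite, mul_comm]
      simp only [dotProduct, hPv]
      simp only [hv]
      have expand : ∀ j, (S i j - if j = i then (1/2:ℝ) else 0)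
            * ((∑ k, P j k * S i k) - (1/2) * P j i)
          = (∑ k, S i j * (S i k * P j k)) - (1/2) * (S i j * P j i)
            - ((if j = i then (1/2:ℝ) else 0) * ∑ k, P j k * S i k)
            + (1/2) * ((if j = i then (1/2:ℝ) else 0) * P j i) := by
        intro j
        have hrw : (∑ k, S i j * (S i k * P j k)) = S i j * ∑ k, P j k * S i k := by
          rw [Finset.mul_sum]
          exact Finset.sum_congr rfl fun k _ => by ring
        rw [hrw]
        ring
      simp_rw [expand]
      rw [Finset.sum_add_distrib, Finset.sum_sub_distrib, Finset.sum_sub_distrib]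
      have t1 : (∑ j, (1/2) * (S i j * P j i)) = (1/2) * ∑ j, S i j * P i j := by
        rw [← Finset.mul_sum]
        congr 1
        exact Finset.sum_congr rfl fun j _ => by rw [hPsym j i]
      have t2 : (∑ j, (if j = i then (1/2:ℝ) else 0) * ∑ k, P j k * S i k)
          = (1/2) * ∑ j, S i j * P i j := by
        simp only [ite_mul, zero_mul, Finset.sum_ite_eq', Finset.mem_univ, if_true]
        rw [Finset.mul_sum, Finset.mul_sum]
        exact Finset.sum_congr rfl fun k _ => by ring
      have t3 : (∑ j, (1/2) * ((if j = i then (1/2:ℝ) else 0) * P j i))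
          = (1/4) * P i i := by
        simp only [mul_ite, ite_mul, zero_mul, mul_zero, Finset.sum_ite_eq',
          Finset.mem_univ, if_true]
        ring
      rw [t1, t2, t3]
      ring
    have hq2 : 0 ≤ (∑ j, S i j * ∑ k, S i k * (2 * P j k))
        - 2 * (∑ j, S i j * P i j) + (1/2) * P i i := by
      have hdouble : (∑ j, S i j * ∑ k, S i k * (2 * P j k))
          = 2 * ∑ j, ∑ k, S i j * (S i k * P j k) := by
        rw [Finset.mul_sum]
        refine Finset.sum_congr rfl fun j _ => ?_
        rw [Finset.mul_sum, Finset.mul_sum]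
        exact Finset.sum_congr rfl fun k _ => by ring
      rw [hdouble]
      nlinarith [hq, hexp]
    linarith
  -- sum over the diagonal
  unfold Matrix.trace
  exact Finset.sum_le_sum fun i _ => hper i
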